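/- (Inequality for large subsets in Appendix C) Let k > 0 and α > 0 be real numbers, and set β₁ = 1 − α²k² and β₂ = 2α(1 + αk). Then for every real t with k/2 ≤ t ≤ k: ln(β₁ + β₂·t)/(2t) ≥ (1/k)·ln(1 + αk). Equivalently, (1/(2t))·ln( 1 + 2αt + 2α²k(t − k/2) ) ≥ (1/k)·ln(1 + αk) for all t ∈ [k/2, k], with equality at t = k/2 and t = k. -/

import Mathlib

/-- **Inequality for large subsets in Appendix C**. For real `k > 0`, `α > 0`, with
`β₁ = 1 − α²k²` and `β₂ = 2α(1 + αk)`, one has for all `t ∈ [k/2, k]`: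
`ln(β₁ + β₂ t)/(2t) ≥ (1/k) ln(1 + αk)`, equivalently
`(1/(2t)) ln(1 + 2αt + 2α²k(t − k/2)) ≥ (1/k) ln(1 + αk)`, with equality at `t = k/2`
and `t = k`. -/
theorem appendixC_large_subsets
    (k α : ℝ) (hk : 0 < k) (hα : 0 < α)
    (β₁ β₂ : ℝ) (hβ₁ : β₁ = 1 - α ^ 2 * k ^ 2) (hβ₂ : β₂ = 2 * α * (1 + α * k)) :
    (∀ t : ℝ, k / 2 ≤ t → t ≤ k →
        (1 / k) * Real.log (1 + α * k) ≤ Real.log (β₁ + β₂ * t) / (2 * t)) ∧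
      (∀ t : ℝ, k / 2 ≤ t → t ≤ k →
        (1 / k) * Real.log (1 + α * k)
          ≤ (1 / (2 * t)) * Real.log (1 + 2 * α * t + 2 * α ^ 2 * k * (t - k / 2))) ∧
      Real.log (β₁ + β₂ * (k / 2)) / (2 * (k / 2)) = (1 / k) * Real.log (1 + α * k) ∧
      Real.log (β₁ + β₂ * k) / (2 * k) = (1 / k) * Real.log (1 + α * k) := by
  have h1 : (0:ℝ) < 1 + α * k := by nlinarith
  have main : ∀ t : ℝ, k / 2 ≤ t → t ≤ k →
      (1 / k) * Real.log (1 + α * k) ≤ Real.log (β₁ + β₂ * t) / (2 * t) := by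
    intro t ht1 ht2
    have ht : 0 < t := by linarith
    set a : ℝ := (2 * k - 2 * t) / k with ha_def
    set b : ℝ := (2 * t - k) / k with hb_def
    have ha : 0 ≤ a := by
      apply div_nonneg _ hk.le; linarith
    have hb : 0 ≤ b := by
      apply div_nonneg _ hk.le; linarith
    have hab : a + b = 1 := by
      rw [ha_def, hb_def]
      field_simp
      ring
    have hx : (1 + α * k) ∈ Set.Ioi (0:ℝ) := h1
    have hy : ((1 + α * k) ^ 2) ∈ Set.Ioi (0:ℝ) := by
      exact Set.mem_Ioi.mpr (by positivity)
    have key := strictConcaveOn_log_Ioi.concaveOn.2 hx hy ha hb hab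
    have heq : a • (1 + α * k) + b • ((1 + α * k) ^ 2) = β₁ + β₂ * t := by
      simp only [smul_eq_mul, ha_def, hb_def, hβ₁, hβ₂]
      field_simp
      ring
    rw [heq] at key
    have hlog2 : Real.log ((1 + α * k) ^ 2) = 2 * Real.log (1 + α * k) := by
      rw [Real.log_pow]; push_cast; ring
    have key2 : (a + 2 * b) * Real.log (1 + α * k) ≤ Real.log (β₁ + β₂ * t) := by
      calc (a + 2 * b) * Real.log (1 + α * k)
          = a • Real.log (1 + α * k) + b • Real.log ((1 + α * k) ^ 2) := by
            simp only [smul_eq_mul, hlog2]; ring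
        _ ≤ Real.log (β₁ + β₂ * t) := key
    rw [le_div_iff₀ (by linarith : (0:ℝ) < 2 * t)]
    have hsum : a + 2 * b = 2 * t / k := by
      field_simp [ha_def, hb_def]; rw [ha_def, hb_def, add_mul, div_mul_cancel₀ _ hk.ne', mul_assoc, div_mul_cancel₀ _ hk.ne']; ring
    calc 1 / k * Real.log (1 + α * k) * (2 * t)
        = (a + 2 * b) * Real.log (1 + α * k) := by
          rw [hsum]; field_simp
      _ ≤ Real.log (β₁ + β₂ * t) := key2
  refine ⟨main, ?_, ?_, ?_⟩
  · intro t ht1 ht2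
    have h := main t ht1 ht2
    have heq : 1 + 2 * α * t + 2 * α ^ 2 * k * (t - k / 2) = β₁ + β₂ * t := by
      rw [hβ₁, hβ₂]; ring
    rw [heq]
    calc (1 / k) * Real.log (1 + α * k) ≤ Real.log (β₁ + β₂ * t) / (2 * t) := h
      _ = 1 / (2 * t) * Real.log (β₁ + β₂ * t) := by ring
  · have heq : β₁ + β₂ * (k / 2) = 1 + α * k := by rw [hβ₁, hβ₂]; ring
    rw [heq]
    field_simp
  · have heq : β₁ + β₂ * k = (1 + α * k) ^ 2 := by rw [hβ₁, hβ₂]; ring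
    rw [heq, Real.log_pow]
    push_cast
    field_simp
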